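/- Let F_d be the free group on d ≥ 2 generators and μ a generating probability measure supported on the generators and their inverses, with p_j = μ(a_j) for j = ±1,…,±d. Then there exist unique numbers q_j ∈ (0,1) satisfying q_j = p_j + q_j·Σ_{i≠j} p_i·q_{−i} for all j. -/

import Mathlib

/-- Per-term slope monotonicity for `t ↦ √(t²+c)`. -/
lemma sqrt_slope_mono {c t1 t2 : ℝ} (hc : 0 < c) (h1 : 0 < t1) (h12 : t1 < t2) :
    t2 * (Real.sqrt (t1^2 + c) - Real.sqrt c) < t1 * (Real.sqrt (t2^2 + c) - Real.sqrt c) := by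
  set s1 := Real.sqrt (t1^2 + c) with hs1d
  set s2 := Real.sqrt (t2^2 + c) with hs2d
  set r := Real.sqrt c with hrd
  have hs1 : s1^2 = t1^2 + c := Real.sq_sqrt (by positivity)
  have hs2 : s2^2 = t2^2 + c := Real.sq_sqrt (by positivity)
  have hr : r^2 = c := Real.sq_sqrt hc.le
  have hrpos : 0 < r := Real.sqrt_pos.2 hc
  have hs1r : r < s1 := by
    rw [hs1d, hrd]; exact Real.sqrt_lt_sqrt hc.le (by nlinarith)
  have hs2r : r < s2 := by
    rw [hs2d, hrd]; exact Real.sqrt_lt_sqrt hc.le (by nlinarith)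
  have hs1pos : 0 < s1 := hrpos.trans hs1r
  have hs2pos : 0 < s2 := hrpos.trans hs2r
  have hZ : 0 < t2*s1 + t1*s2 := add_pos (mul_pos (h1.trans h12) hs1pos) (mul_pos h1 hs2pos)
  have key : (t2*s1 - t1*s2) * (t2*s1 + t1*s2) < ((t2-t1)*r) * (t2*s1 + t1*s2) := by
    have e1 : (t2*s1 - t1*s2) * (t2*s1 + t1*s2) = c*(t2^2 - t1^2) := by
      have : t2^2*s1^2 - t1^2*s2^2 = c*(t2^2-t1^2) := by rw [hs1, hs2]; ring
      nlinarith [this]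
    rw [e1]
    have h2 : c*(t2+t1) < t2*(r*s1) + t1*(r*s2) := by
      nlinarith [mul_pos h1 hrpos, mul_pos (h1.trans h12) hrpos]
    nlinarith [mul_pos (sub_pos.2 h12) (sub_pos.2 h2)]
  have hfin := lt_of_mul_lt_mul_right key hZ.le
  nlinarith [hfin]

/-- AM–GM: `√(4ab) ≤ a + b` for nonnegative `a, b`. -/
lemma sqrt_four_mul_le {a b : ℝ} (ha : 0 ≤ a) (hb : 0 ≤ b) :
    Real.sqrt (4 * a * b) ≤ a + b := by
  have h : 4 * a * b ≤ (a + b)^2 := by nlinarith [sq_nonneg (a - b)]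
  calc Real.sqrt (4 * a * b) ≤ Real.sqrt ((a+b)^2) := Real.sqrt_le_sqrt h
    _ = a + b := Real.sqrt_sq (by linarith)

set_option maxHeartbeats 1000000 in
/-- For the free group `F_d` (`d ≥ 2`) and a generating probability measure
supported on the generators and their inverses (indices `j ∈ {±1,…,±d}`, with
`p_j = μ(a_j) > 0` and `Σ p_j = 1`), there exist unique numbers `q_j ∈ (0,1)`
satisfying `q_j = p_j + q_j·Σ_{i≠j} p_i·q_{−i}` for all `j`. -/
theorem exists_unique_hitting_probabilities (d : ℕ) (hd : 2 ≤ d)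
    (p : ℤ → ℝ)
    (hpos : ∀ j ∈ Finset.Icc (1:ℤ) d ∪ Finset.Icc (-(d:ℤ)) (-1), 0 < p j)
    (hzero : ∀ j ∉ Finset.Icc (1:ℤ) d ∪ Finset.Icc (-(d:ℤ)) (-1), p j = 0)
    (hsum : ∑ j ∈ Finset.Icc (1:ℤ) d ∪ Finset.Icc (-(d:ℤ)) (-1), p j = 1) :
    ∃! q : ℤ → ℝ,
      (∀ j ∉ Finset.Icc (1:ℤ) d ∪ Finset.Icc (-(d:ℤ)) (-1), q j = 0) ∧
      ∀ j ∈ Finset.Icc (1:ℤ) d ∪ Finset.Icc (-(d:ℤ)) (-1),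
        q j ∈ Set.Ioo (0:ℝ) 1 ∧
        q j = p j + q j *
          ∑ i ∈ (Finset.Icc (1:ℤ) d ∪ Finset.Icc (-(d:ℤ)) (-1)).erase j,
            p i * q (-i) := by
  classical
  set A : Finset ℤ := Finset.Icc (1:ℤ) (d:ℤ) ∪ Finset.Icc (-(d:ℤ)) (-1) with hA
  have hd2 : (2:ℤ) ≤ (d:ℤ) := by exact_mod_cast hd
  have hmem : ∀ j : ℤ, j ∈ A ↔ (1 ≤ j ∧ j ≤ (d:ℤ)) ∨ (-(d:ℤ) ≤ j ∧ j ≤ -1) := by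
    intro j; simp [hA, Finset.mem_union, Finset.mem_Icc]
  have hneg : ∀ j ∈ A, -j ∈ A := by
    intro j hj; rw [hmem] at hj ⊢; omega
  have hsumneg : ∀ f : ℤ → ℝ, ∑ j ∈ A, f (-j) = ∑ j ∈ A, f j := by
    intro f
    exact Finset.sum_nbij' (fun j => -j) (fun j => -j) hneg hneg
      (fun a _ => neg_neg a) (fun a _ => neg_neg a) (fun a _ => rfl)
  have hcard : A.card = 2 * d := by
    rw [hA, Finset.card_union_of_disjoint]
    · rw [Int.card_Icc, Int.card_Icc]; omega
    · rw [Finset.disjoint_left]; intro x hx hx'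
      simp [Finset.mem_Icc] at hx hx'; omega
  have hAne : A.Nonempty := ⟨1, by rw [hmem]; omega⟩
  have hp : ∀ j ∈ A, 0 < p j := hpos
  set c : ℤ → ℝ := fun j => 4 * p j * p (-j) with hcdef
  have hc : ∀ j ∈ A, 0 < c j := by
    intro j hj
    have := hp j hj
    have := hp (-j) (hneg j hj)
    simp only [hcdef]; positivity
  have hcsymm : ∀ j : ℤ, c (-j) = c j := by
    intro j; simp only [hcdef, neg_neg]; ring
  set S : ℝ → ℝ := fun t => ∑ j ∈ A, Real.sqrt (t^2 + c j) with hSdef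
  set G : ℝ → ℝ := fun t => S t - 2 - 2*((d:ℝ)-1)*t with hGdef
  have hdR : (1:ℝ) ≤ (d:ℝ) - 1 := by
    have : (2:ℝ) ≤ (d:ℝ) := by exact_mod_cast hd
    linarith
  have hAM : ∀ m ∈ A, Real.sqrt (c m) ≤ p m + p (-m) := by
    intro m hm
    exact sqrt_four_mul_le (hp m hm).le (hp (-m) (hneg m hm)).le
  have hsum2 : ∑ m ∈ A, (p m + p (-m)) = 2 := by
    rw [Finset.sum_add_distrib, hsumneg p, hsum]; norm_num
  -- G 0 ≤ 0
  have hG0 : G 0 ≤ 0 := by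
    have hS0 : S 0 ≤ 2 := by
      calc S 0 = ∑ j ∈ A, Real.sqrt (c j) := by
            simp only [hSdef]
            exact Finset.sum_congr rfl (fun j _ => by norm_num)
        _ ≤ ∑ j ∈ A, (p j + p (-j)) := Finset.sum_le_sum hAM
        _ = 2 := hsum2
    simp only [hGdef]; linarith
  -- G 1 > 0
  have hG1 : 0 < G 1 := by
    have hS1 : (2*d : ℝ) < S 1 := by
      have : ∑ _j ∈ A, (1:ℝ) < S 1 := by
        apply Finset.sum_lt_sum_of_nonempty hAne
        intro j hj
        have hcj := hc j hj
        have h1 : (1:ℝ) = Real.sqrt 1 := by simp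
        rw [h1]
        apply Real.sqrt_lt_sqrt (by norm_num)
        nlinarith
      rwa [Finset.sum_const, hcard, nsmul_eq_mul, Nat.cast_mul, Nat.cast_ofNat, mul_one] at this
    simp only [hGdef]
    have : (2:ℝ) + 2*((d:ℝ)-1)*1 = 2*d := by ring
    linarith
  -- slope monotonicity of G
  have Gmono : ∀ t1 t2 : ℝ, 0 < t1 → t1 < t2 →
      t2 * (G t1 - G 0) < t1 * (G t2 - G 0) := by
    intro t1 t2 h1 h12
    have hS : t2 * (S t1 - S 0) < t1 * (S t2 - S 0) := by
      have e : ∀ u v : ℝ, v * (S u - S 0)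
          = ∑ j ∈ A, v * (Real.sqrt (u^2 + c j) - Real.sqrt (c j)) := by
        intro u v
        simp only [hSdef]
        rw [← Finset.sum_sub_distrib, Finset.mul_sum]
        congr 1; funext j
        norm_num
      rw [e t1 t2, e t2 t1]
      apply Finset.sum_lt_sum_of_nonempty hAne
      intro j hj
      exact sqrt_slope_mono (hc j hj) h1 h12
    simp only [hGdef]
    nlinarith [hS]
  -- choose ε with G ε < 0
  set M : ℝ := ∑ j ∈ A, 1 / (2 * Real.sqrt (c j)) with hMdef
  have hM0 : 0 ≤ M := Finset.sum_nonneg (fun j _ => by positivity)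
  set ε : ℝ := min (((d:ℝ)-1)/(M+1)) (1/2) with hεdef
  have hεpos : 0 < ε := by
    apply lt_min
    · apply div_pos (by linarith) (by linarith)
    · norm_num
  have hεlt1 : ε < 1 := lt_of_le_of_lt (min_le_right _ _) (by norm_num)
  have hGε : G ε < 0 := by
    have hSε : S ε ≤ S 0 + ε^2 * M := by
      have : S ε ≤ ∑ j ∈ A, (Real.sqrt (c j) + ε^2 * (1 / (2 * Real.sqrt (c j)))) := by
        apply Finset.sum_le_sum
        intro j hj
        have hcj := hc j hj
        have hrpos : 0 < Real.sqrt (c j) := Real.sqrt_pos.2 hcj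
        have hr2 : (Real.sqrt (c j))^2 = c j := Real.sq_sqrt hcj.le
        have hb : ε^2 + c j ≤ (Real.sqrt (c j) + ε^2 * (1 / (2 * Real.sqrt (c j))))^2 := by
          have expand : (Real.sqrt (c j) + ε^2 * (1 / (2 * Real.sqrt (c j))))^2
              = c j + ε^2 + (ε^2/ (2*Real.sqrt (c j)))^2 := by
            field_simp
            nlinarith [hr2]
          rw [expand]
          nlinarith [sq_nonneg (ε^2/(2*Real.sqrt (c j)))]
        calc Real.sqrt (ε^2 + c j)
            ≤ Real.sqrt ((Real.sqrt (c j) + ε^2 * (1 / (2 * Real.sqrt (c j))))^2) :=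
              Real.sqrt_le_sqrt hb
          _ = Real.sqrt (c j) + ε^2 * (1 / (2 * Real.sqrt (c j))) := by
              apply Real.sqrt_sq; positivity
      rw [Finset.sum_add_distrib] at this
      have e0 : S 0 = ∑ j ∈ A, Real.sqrt (c j) := by
        simp only [hSdef]
        exact Finset.sum_congr rfl (fun j _ => by norm_num)
      rw [← Finset.mul_sum] at this
      rw [e0]
      exact this
    have hεM : ε * M ≤ (d:ℝ) - 1 := by
      have h1 : ε ≤ ((d:ℝ)-1)/(M+1) := min_le_left _ _
      have h2 : ε * M ≤ (((d:ℝ)-1)/(M+1)) * M := by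
        apply mul_le_mul_of_nonneg_right h1 hM0
      calc ε * M ≤ (((d:ℝ)-1)/(M+1)) * M := h2
        _ ≤ (d:ℝ) - 1 := by
            rw [div_mul_eq_mul_div, div_le_iff₀ (by linarith)]
            nlinarith
    have : G ε ≤ G 0 + ε^2 * M - 2*((d:ℝ)-1)*ε := by
      simp only [hGdef]; linarith
    have h3 : ε^2 * M - 2*((d:ℝ)-1)*ε < 0 := by
      have : ε^2 * M = ε * (ε * M) := by ring
      rw [this]
      have h4 : ε * (ε*M) ≤ ε * ((d:ℝ)-1) := by
        apply mul_le_mul_of_nonneg_left hεM hεpos.le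
      nlinarith
    linarith
  -- IVT: root t ∈ (ε, 1)
  have hcont : Continuous G := by
    have h1 : Continuous S := by
      apply continuous_finset_sum
      intro j _
      exact Real.continuous_sqrt.comp ((continuous_pow 2).add continuous_const)
    have h2 : Continuous fun u : ℝ => S u - 2 - 2*((d:ℝ)-1)*u :=
      (h1.sub continuous_const).sub (continuous_const.mul continuous_id)
    exact h2
  obtain ⟨t, htmem, hGt⟩ : ∃ t ∈ Set.Ioo ε 1, G t = 0 := by
    have h := intermediate_value_Ioo hεlt1.le hcont.continuousOn
    have : (0:ℝ) ∈ Set.Ioo (G ε) (G 1) := ⟨hGε, hG1⟩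
    obtain ⟨t, ht, hgt⟩ := h this
    exact ⟨t, ht, hgt⟩
  have htpos : 0 < t := hεpos.trans htmem.1
  have htlt1 : t < 1 := htmem.2
  -- sign of G away from the root
  have hGbig : ∀ u : ℝ, t < u → 0 < G u := by
    intro u hu
    have := Gmono t u htpos hu
    rw [hGt] at this
    nlinarith [this]
  have hGsmall : ∀ u : ℝ, 0 < u → u < t → G u < 0 := by
    intro u hu hut
    have := Gmono u t hu hut
    rw [hGt] at this
    nlinarith [this]
  have hroot_lt : ∀ u : ℝ, 0 < u → G u < 0 → u < t := by
    intro u hu hGu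
    rcases lt_trichotomy u t with h | h | h
    · exact h
    · rw [h, hGt] at hGu; exact absurd hGu (lt_irrefl 0)
    · exact absurd hGu (not_lt.2 (hGbig u h).le)
  have huniq_root : ∀ u : ℝ, 0 < u → G u = 0 → u = t := by
    intro u hu hGu
    rcases lt_trichotomy u t with h | h | h
    · exact absurd hGu (hGsmall u hu h).ne
    · exact h
    · exact absurd hGu (hGbig u h).ne'
  have hStval : S t = 2 + 2*((d:ℝ)-1)*t := by
    simp only [hGdef] at hGt; linarith
  -- definition of the solution
  set Q : ℤ → ℝ := fun j =>
    if j ∈ A then (Real.sqrt (t^2 + c j) - t)/(2 * p (-j)) else 0 with hQdef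
  have hsqgt : ∀ j ∈ A, t < Real.sqrt (t^2 + c j) := by
    intro j hj
    have : t = Real.sqrt (t^2) := (Real.sqrt_sq htpos.le).symm
    rw [this]
    exact Real.sqrt_lt_sqrt (sq_nonneg t) (by nlinarith [hc j hj, Real.sq_sqrt htpos.le])
  have hsq2 : ∀ j ∈ A, (Real.sqrt (t^2 + c j))^2 = t^2 + c j := by
    intro j hj
    exact Real.sq_sqrt (by nlinarith [hc j hj])
  have hQval : ∀ j ∈ A, Q j = (Real.sqrt (t^2 + c j) - t)/(2 * p (-j)) := by
    intro j hj; simp only [hQdef, if_pos hj]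
  have hQpos : ∀ j ∈ A, 0 < Q j := by
    intro j hj
    rw [hQval j hj]
    exact div_pos (by linarith [hsqgt j hj]) (by linarith [hp (-j) (hneg j hj)])
  have hpq : ∀ i ∈ A, p i * Q (-i) = (Real.sqrt (t^2 + c i) - t)/2 := by
    intro i hi
    have hni : -i ∈ A := hneg i hi
    rw [hQval (-i) hni, hcsymm i, neg_neg]
    have hpi := hp i hi
    field_simp
  have hSig : ∑ i ∈ A, p i * Q (-i) = 1 - t := by
    rw [Finset.sum_congr rfl hpq, ← Finset.sum_div, Finset.sum_sub_distrib,
      Finset.sum_const, hcard, nsmul_eq_mul]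
    have hSt : (∑ j ∈ A, Real.sqrt (t^2 + c j)) = S t := rfl
    rw [hSt, hStval]
    push_cast
    ring
  -- Q j < 1
  have hdiff_lt : ∀ j ∈ A, p j - p (-j) < t := by
    intro j hj
    rcases le_or_gt (p j) (p (-j)) with h | h
    · linarith
    · set u : ℝ := p j - p (-j) with hudef
      have hu : 0 < u := by simp only [hudef]; linarith
      apply hroot_lt u hu
      -- G u < 0
      have hj0 : j ≠ 0 := by rw [hmem] at hj; omega
      have hjnj : -j ≠ j := by omega
      have hnjA : -j ∈ A := hneg j hj
      have hnj_mem : -j ∈ A.erase j := Finset.mem_erase.2 ⟨hjnj, hnjA⟩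
      set B : Finset ℤ := (A.erase j).erase (-j) with hBdef
      have hsplit : S u = Real.sqrt (u^2 + c j) + Real.sqrt (u^2 + c (-j))
          + ∑ m ∈ B, Real.sqrt (u^2 + c m) := by
        simp only [hSdef, hBdef]
        rw [← Finset.sum_erase_add A _ hj, ← Finset.sum_erase_add (A.erase j) _ hnj_mem]
        ring
      have hterm : Real.sqrt (u^2 + c j) = p j + p (-j) := by
        have : u^2 + c j = (p j + p (-j))^2 := by simp only [hudef, hcdef]; ring
        rw [this, Real.sqrt_sq (by linarith [hp j hj, hp (-j) hnjA])]
      have hBcard : B.card = 2*d - 2 := by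
        simp only [hBdef]
        rw [Finset.card_erase_of_mem hnj_mem, Finset.card_erase_of_mem hj, hcard]
        omega
      have hBne : B.Nonempty := by
        rw [← Finset.card_pos, hBcard]; omega
      have hBsub : ∀ m ∈ B, m ∈ A := by
        intro m hm
        simp only [hBdef] at hm
        exact Finset.mem_of_mem_erase (Finset.mem_of_mem_erase hm)
      have hBbound : ∑ m ∈ B, Real.sqrt (u^2 + c m)
          < ∑ m ∈ B, (u + (p m + p (-m))) := by
        apply Finset.sum_lt_sum_of_nonempty hBne
        intro m hm
        have hmA := hBsub m hm
        have hcm := hc m hmA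
        have hrm : 0 < Real.sqrt (c m) := Real.sqrt_pos.2 hcm
        have step1 : Real.sqrt (u^2 + c m) < u + Real.sqrt (c m) := by
          have hb : u^2 + c m < (u + Real.sqrt (c m))^2 := by
            nlinarith [Real.sq_sqrt hcm.le, mul_pos hu hrm]
          calc Real.sqrt (u^2 + c m) < Real.sqrt ((u + Real.sqrt (c m))^2) :=
                Real.sqrt_lt_sqrt (by positivity) hb
            _ = u + Real.sqrt (c m) := Real.sqrt_sq (by positivity)
        linarith [hAM m hmA]
      have hBsum : ∑ m ∈ B, (u + (p m + p (-m)))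
          = (2*(d:ℝ) - 2) * u + (2 - 2*(p j + p (-j))) := by
        rw [Finset.sum_add_distrib, Finset.sum_const, hBcard, nsmul_eq_mul]
        have hBp : ∑ m ∈ B, (p m + p (-m)) = 2 - 2*(p j + p (-j)) := by
          have e1 : ∑ m ∈ B, (p m + p (-m)) + (p (-j) + p (-(-j)))
              = ∑ m ∈ A.erase j, (p m + p (-m)) :=
            Finset.sum_erase_add (A.erase j) _ hnj_mem
          have e2 : ∑ m ∈ A.erase j, (p m + p (-m)) + (p j + p (-j))
              = ∑ m ∈ A, (p m + p (-m)) :=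
            Finset.sum_erase_add A _ hj
          rw [hsum2] at e2
          rw [neg_neg] at e1
          linarith
        rw [hBp]
        push_cast [Nat.cast_sub (by omega : 2 ≤ 2*d)]
        ring
      have hclt : c (-j) = c j := hcsymm j
      have : S u < 2 + (2*(d:ℝ) - 2) * u := by
        rw [hsplit, hclt, hterm]
        calc (p j + p (-j)) + (p j + p (-j)) + ∑ m ∈ B, Real.sqrt (u^2 + c m)
            < (p j + p (-j)) + (p j + p (-j)) + ((2*(d:ℝ)-2)*u + (2 - 2*(p j + p (-j)))) := by
              rw [← hBsum]; linarith [hBbound]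
          _ = 2 + (2*(d:ℝ) - 2) * u := by ring
      simp only [hGdef]
      nlinarith [this]
  have hQlt1 : ∀ j ∈ A, Q j < 1 := by
    intro j hj
    have hb := hp (-j) (hneg j hj)
    have ha := hp j hj
    have hs := hsq2 j hj
    have hdl := hdiff_lt j hj
    rw [hQval j hj, div_lt_one (by linarith)]
    have : Real.sqrt (t^2 + c j) < t + 2 * p (-j) := by
      have hb2 : t^2 + c j < (t + 2*p (-j))^2 := by
        simp only [hcdef]
        nlinarith
      calc Real.sqrt (t^2 + c j) < Real.sqrt ((t + 2*p (-j))^2) :=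
            Real.sqrt_lt_sqrt (by nlinarith [hc j hj]) hb2
        _ = t + 2*p (-j) := Real.sqrt_sq (by linarith)
    linarith
  -- the fixed point equation for Q
  have hQeq : ∀ j ∈ A, Q j = p j + Q j * ∑ i ∈ A.erase j, p i * Q (-i) := by
    intro j hj
    have herase : ∑ i ∈ A.erase j, p i * Q (-i)
        = (1 - t) - (Real.sqrt (t^2 + c j) - t)/2 := by
      have h0 := Finset.sum_erase_add A (fun i => p i * Q (-i)) hj
      beta_reduce at h0
      rw [hSig] at h0
      rw [hpq j hj] at h0
      linarith
    rw [herase, hQval j hj]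
    have hb := hp (-j) (hneg j hj)
    have hs := hsq2 j hj
    set s := Real.sqrt (t^2 + c j) with hsdef
    have hcj : c j = 4 * p j * p (-j) := rfl
    rw [hcj] at hs
    field_simp
    nlinarith [hs]
  -- EXISTENCE done; now uniqueness
  refine ⟨Q, ⟨fun j hj => by simp only [hQdef, if_neg hj], fun j hj => ⟨⟨hQpos j hj, hQlt1 j hj⟩, hQeq j hj⟩⟩, ?_⟩
  rintro q ⟨hq0', hqA'⟩
  set t' : ℝ := 1 - ∑ i ∈ A, p i * q (-i) with ht'def
  have hqmem : ∀ i ∈ A, q i ∈ Set.Ioo (0:ℝ) 1 := fun i hi => (hqA' i hi).1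
  have hSig'pos : 0 < ∑ i ∈ A, p i * q (-i) := by
    apply Finset.sum_pos _ hAne
    intro i hi
    exact mul_pos (hp i hi) (hqmem (-i) (hneg i hi)).1
  have hSig'lt : ∑ i ∈ A, p i * q (-i) < 1 := by
    calc ∑ i ∈ A, p i * q (-i) < ∑ i ∈ A, p i := by
          apply Finset.sum_lt_sum_of_nonempty hAne
          intro i hi
          have h1 := (hqmem (-i) (hneg i hi)).2
          nlinarith [hp i hi]
      _ = 1 := hsum
  have ht'pos : 0 < t' := by simp only [ht'def]; linarith
  have hE : ∀ j ∈ A, q j * t' + p j * (q j * q (-j)) = p j := by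
    intro j hj
    have heq := (hqA' j hj).2
    have herase : ∑ i ∈ A.erase j, p i * q (-i) = (1 - t') - p j * q (-j) := by
      have h0 := Finset.sum_erase_add A (fun i => p i * q (-i)) hj
      beta_reduce at h0
      simp only [ht'def]
      linarith [h0]
    rw [herase] at heq
    linear_combination heq
  have hX : ∀ j ∈ A, p (-j) * q j = p j * q (-j) := by
    intro j hj
    have h1 := hE j hj
    have h2 := hE (-j) (hneg j hj)
    rw [neg_neg] at h2
    have key : (p (-j) * q j) * t' = (p j * q (-j)) * t' := by
      linear_combination p (-j) * h1 - p j * h2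
    exact mul_right_cancel₀ ht'pos.ne' key
  have hform : ∀ j ∈ A, q j = (Real.sqrt (t'^2 + c j) - t')/(2 * p (-j)) := by
    intro j hj
    have hquad : p (-j) * (q j)^2 + t' * q j - p j = 0 := by
      have h1 := hE j hj
      have h2 := hX j hj
      linear_combination h1 + q j * h2
    have hb := hp (-j) (hneg j hj)
    have hq0 := (hqmem j hj).1
    have hsq : t'^2 + c j = (2 * p (-j) * q j + t')^2 := by
      have hcj : c j = 4 * p j * p (-j) := rfl
      rw [hcj]
      linear_combination (-4 * p (-j)) * hquad
    have hpos2 : 0 < 2 * p (-j) * q j + t' := by nlinarith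
    have hsqrt : Real.sqrt (t'^2 + c j) = 2 * p (-j) * q j + t' := by
      rw [hsq, Real.sqrt_sq hpos2.le]
    rw [hsqrt]
    field_simp
    ring
  have hpq' : ∀ i ∈ A, p i * q (-i) = (Real.sqrt (t'^2 + c i) - t')/2 := by
    intro i hi
    rw [hform (-i) (hneg i hi), hcsymm i, neg_neg]
    have := hp i hi
    field_simp
  have hGt' : G t' = 0 := by
    have h1 : ∑ i ∈ A, p i * q (-i) = 1 - t' := by
      simp only [ht'def]; ring
    rw [Finset.sum_congr rfl hpq', ← Finset.sum_div, Finset.sum_sub_distrib,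
      Finset.sum_const, hcard, nsmul_eq_mul] at h1
    have hSt : (∑ j ∈ A, Real.sqrt (t'^2 + c j)) = S t' := rfl
    rw [hSt] at h1
    simp only [hGdef]
    push_cast at h1 ⊢
    linear_combination 2 * h1
  have ht'eq : t' = t := huniq_root t' ht'pos hGt'
  funext j
  by_cases hj : j ∈ A
  · rw [hform j hj, hQval j hj, ht'eq]
  · rw [hq0' j hj]
    simp only [hQdef, if_neg hj]
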